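/- There is no finite family H₁, …, Hₙ of simple graphs (n a natural number) such that for every simple graph G the following equivalence holds: G has no edges if and only if there exist an index i and a graph embedding of Hᵢ into G. -/

import Mathlib

/-- There is no finite family `H₁, …, Hₙ` of simple graphs such that for every simple
graph `G`: `G` has no edges if and only if some `Hᵢ` admits a graph embedding into `G`. -/
theorem no_finite_family_characterizes_edgeless :
    ¬ ∃ (n : ℕ) (V : Fin n → Type) (H : ∀ i : Fin n, SimpleGraph (V i)),
        ∀ (W : Type) (G : SimpleGraph W),
          (∀ v w : W, ¬ G.Adj v w) ↔ ∃ i : Fin n, Nonempty ((H i) ↪g G) := by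
  rintro ⟨n, V, H, hchar⟩
  -- Apply to the edgeless graph on `Σ i, V i` to find an edgeless `H i`.
  obtain ⟨i, ⟨f⟩⟩ := (hchar (Σ i, V i) ⊥).mp (fun v w h => h)
  have hEdgeless : ∀ a b : V i, ¬ (H i).Adj a b := by
    intro a b hab
    exact (f.map_adj_iff.mpr hab)
  -- A graph on `V i ⊕ Bool` with exactly one edge.
  let G₁ : SimpleGraph (V i ⊕ Bool) := SimpleGraph.fromRel
    (fun x y => x = Sum.inr true ∧ y = Sum.inr false)
  -- `H i` embeds into `G₁` via `Sum.inl`.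
  have hemb : Nonempty ((H i) ↪g G₁) := by
    refine ⟨⟨⟨Sum.inl, Sum.inl_injective⟩, ?_⟩⟩
    intro a b
    simp only [Function.Embedding.coeFn_mk]
    constructor
    · rintro ⟨-, (⟨h, -⟩ | ⟨h, -⟩)⟩ <;> exact absurd h (by simp)
    · intro h; exact absurd h (hEdgeless a b)
  have := (hchar _ G₁).mpr ⟨i, hemb⟩ (Sum.inr true) (Sum.inr false)
  exact this ⟨by simp, Or.inl ⟨rfl, rfl⟩⟩
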